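/- Let Y_0 be the n×n matrix with (Y_0)_{ij} = 1 if i = j or (i > j and i+j is odd) and 0 otherwise. Then Y_0 is invertible with determinant 1, and the entries of Y_0^{-1} satisfy |(Y_0^{-1})_{ij}| = F_{i-j} for i > j, achieving the Fibonacci upper bound for inverses of matrices in K_n. -/

import Mathlib

private def aE (i k : ℕ) : ℝ :=
  if i = k ∨ (k < i ∧ i % 2 ≠ k % 2) then 1 else 0

private def bE (k j : ℕ) : ℝ :=
  if k = j then 1 else if j < k then (-1 : ℝ) ^ (k - j) * Nat.fib (k - j) else 0

private lemma aE_one {i k : ℕ} (h : i = k ∨ (k < i ∧ i % 2 ≠ k % 2)) : aE i k = 1 :=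
  if_pos h

private lemma aE_zero {i k : ℕ} (h : ¬(i = k ∨ (k < i ∧ i % 2 ≠ k % 2))) : aE i k = 0 :=
  if_neg h

private lemma bE_diag (k : ℕ) : bE k k = 1 := if_pos rfl

private lemma bE_lt {k j : ℕ} (h : j < k) :
    bE k j = (-1 : ℝ) ^ (k - j) * Nat.fib (k - j) := by
  unfold bE; rw [if_neg (by omega), if_pos h]

private lemma bE_gt {k j : ℕ} (h : k < j) : bE k j = 0 := by
  unfold bE; rw [if_neg (by omega), if_neg (by omega)]

private lemma fib_alt_sum (d : ℕ) :
    (-1 : ℝ) ^ d * Nat.fib d +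
      ∑ m ∈ Finset.range d,
        (if m % 2 ≠ d % 2 then
          (if m = 0 then (1 : ℝ) else (-1 : ℝ) ^ m * Nat.fib m) else 0) = 0 := by
  induction d using Nat.twoStepInduction with
  | zero => simp
  | one => simp
  | more d ih _ =>
    rw [Finset.sum_range_succ, Finset.sum_range_succ]
    rw [if_pos (by omega : (d + 1) % 2 ≠ (d + 2) % 2),
        if_neg (by omega : ¬ d % 2 ≠ (d + 2) % 2),
        if_neg (by omega : ¬ d + 1 = 0)]
    have hc : ∀ m ∈ Finset.range d,
        (if m % 2 ≠ (d + 2) % 2 then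
          (if m = 0 then (1 : ℝ) else (-1 : ℝ) ^ m * Nat.fib m) else 0) =
        (if m % 2 ≠ d % 2 then
          (if m = 0 then (1 : ℝ) else (-1 : ℝ) ^ m * Nat.fib m) else 0) := by
      intro m _
      congr 1
      simp only [eq_iff_iff]
      omega
    rw [Finset.sum_congr rfl hc]
    have hS : (∑ m ∈ Finset.range d,
        (if m % 2 ≠ d % 2 then
          (if m = 0 then (1 : ℝ) else (-1 : ℝ) ^ m * Nat.fib m) else 0))
        = -((-1 : ℝ) ^ d * Nat.fib d) := by linarith [ih]
    rw [hS, Nat.fib_add_two]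
    push_cast
    ring

private lemma key_sum (n i j : ℕ) (hi : i < n) (hj : j < i) :
    (∑ k ∈ Finset.range n, aE i k * bE k j) = 0 := by
  have hzero : ∀ k ∈ Finset.range n, k ∉ Finset.Icc j i → aE i k * bE k j = 0 := by
    intro k _ hk
    simp only [Finset.mem_Icc, not_and_or, not_le] at hk
    rcases hk with hk | hk
    · rw [bE_gt hk, mul_zero]
    · rw [aE_zero (by push_neg; omega), zero_mul]
  have hsub : Finset.Icc j i ⊆ Finset.range n := by
    intro k hk
    simp only [Finset.mem_Icc] at hk
    simp only [Finset.mem_range]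
    omega
  rw [← Finset.sum_subset hsub hzero]
  rw [← Finset.Ico_add_one_right_eq_Icc, Finset.sum_Ico_succ_top (by omega), Finset.sum_Ico_eq_sum_range]
  have htop : aE i i * bE i j = (-1 : ℝ) ^ (i - j) * Nat.fib (i - j) := by
    rw [aE_one (Or.inl rfl), bE_lt hj, one_mul]
  have hterm : ∀ m ∈ Finset.range (i - j), aE i (j + m) * bE (j + m) j =
      (if m % 2 ≠ (i - j) % 2 then
        (if m = 0 then (1 : ℝ) else (-1 : ℝ) ^ m * Nat.fib m) else 0) := by
    intro m hm
    simp only [Finset.mem_range] at hm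
    have hlt : j + m < i := by omega
    by_cases hpar : m % 2 ≠ (i - j) % 2
    · rw [if_pos hpar, aE_one (Or.inr ⟨hlt, by omega⟩), one_mul]
      by_cases hm0 : m = 0
      · subst hm0; rw [if_pos rfl, Nat.add_zero, bE_diag]
      · rw [if_neg hm0, bE_lt (by omega), Nat.add_sub_cancel_left]
    · rw [if_neg hpar, aE_zero (by push_neg; omega), zero_mul]
  rw [Finset.sum_congr rfl hterm]
  have h := fib_alt_sum (i - j)
  linarith

/-- `Y₀` is invertible with determinant 1 and the entries of `Y₀⁻¹` attain the
Fibonacci bound: `|(Y₀⁻¹)_{ij}| = F_{i-j}` for `i > j`. -/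
theorem stmt_19 (n : ℕ)
    (Y₀ : Matrix (Fin n) (Fin n) ℝ)
    (hY₀ : ∀ i j : Fin n, Y₀ i j =
      if i = j ∨ (j < i ∧ (i : ℕ) % 2 ≠ (j : ℕ) % 2) then 1 else 0) :
    IsUnit Y₀ ∧ Y₀.det = 1 ∧
    ∀ i j : Fin n, j < i → |Y₀⁻¹ i j| = Nat.fib ((i : ℕ) - (j : ℕ)) := by
  set B : Matrix (Fin n) (Fin n) ℝ := Matrix.of (fun i j => bE (i : ℕ) (j : ℕ)) with hBdef
  have hmul : Y₀ * B = 1 := by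
    ext i j
    rw [Matrix.mul_apply]
    have hconv : ∀ k : Fin n, Y₀ i k * B k j = aE (i : ℕ) (k : ℕ) * bE (k : ℕ) (j : ℕ) := by
      intro k
      rw [hY₀]
      have hiff : (i = k ∨ (k < i ∧ (i : ℕ) % 2 ≠ (k : ℕ) % 2)) ↔
          ((i : ℕ) = (k : ℕ) ∨ ((k : ℕ) < (i : ℕ) ∧ (i : ℕ) % 2 ≠ (k : ℕ) % 2)) := by
        rw [Fin.ext_iff, Fin.lt_def]
      congr 1
      unfold aE
      rw [if_congr hiff rfl rfl]
    rw [Finset.sum_congr rfl (fun k _ => hconv k)]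
    rw [Fin.sum_univ_eq_sum_range (fun k => aE (i : ℕ) k * bE k (j : ℕ)) n]
    rcases lt_trichotomy ((j : ℕ)) ((i : ℕ)) with hlt | heq | hgt
    · rw [key_sum n i j i.isLt hlt, Matrix.one_apply_ne (Fin.ne_of_val_ne (by omega))]
    · have hij : i = j := Fin.ext heq.symm
      subst hij
      rw [Matrix.one_apply_eq]
      rw [Finset.sum_eq_single (i : ℕ)]
      · rw [aE_one (Or.inl rfl), bE_diag, one_mul]
      · intro k _ hk
        rcases lt_trichotomy k ((i : ℕ)) with h1 | h2 | h3
        · rw [bE_gt h1, mul_zero]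
        · exact absurd h2 hk
        · rw [aE_zero (by push_neg; omega), zero_mul]
      · intro hmem
        exact absurd (Finset.mem_range.mpr i.isLt) hmem
    · rw [Matrix.one_apply_ne (Fin.ne_of_val_ne (by omega))]
      apply Finset.sum_eq_zero
      intro k _
      rcases le_or_gt k ((i : ℕ)) with h1 | h2
      · rw [bE_gt (by omega), mul_zero]
      · rw [aE_zero (by push_neg; omega), zero_mul]
  have hinv : Y₀⁻¹ = B := Matrix.inv_eq_right_inv hmul
  refine ⟨(Matrix.isUnit_iff_isUnit_det Y₀).mpr (Matrix.isUnit_det_of_right_inverse hmul), ?_, ?_⟩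
  · have htri : Y₀.BlockTriangular (OrderDual.toDual : Fin n → (Fin n)ᵒᵈ) := by
      intro i j hij
      have h : (i : ℕ) < (j : ℕ) := hij
      rw [hY₀, if_neg]
      rintro (rfl | ⟨hji, -⟩)
      · omega
      · have h2 := Fin.lt_def.mp hji
        omega
    rw [Matrix.det_of_lowerTriangular Y₀ htri]
    apply Finset.prod_eq_one
    intro i _
    rw [hY₀, if_pos (Or.inl rfl)]
  · intro i j hij
    have hij' : (j : ℕ) < (i : ℕ) := hij
    rw [hinv]
    show |bE (i : ℕ) (j : ℕ)| = Nat.fib ((i : ℕ) - (j : ℕ))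
    rw [bE_lt hij', abs_mul, abs_pow, abs_neg, abs_one, one_pow, one_mul, Nat.abs_cast]
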